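/- Let n ≥ 3 and ω = exp(2πi/n). Suppose f : S¹ → S¹ is a homeomorphism of the unit circle in ℂ such that f(1) = 1 and f(ωz) = ω f(z) for every z ∈ S¹. Then |f(z) − z| ≤ |ω − 1| for every z ∈ S¹. In particular, if for each n the map f_n : S¹ → S¹ is a homeomorphism fixing 1 and commuting with the rotation z ↦ exp(2πi/n)z, then f_n converges uniformly to the identity map of S¹ as n → ∞. -/

import Mathlib

noncomputable section

open Complex Real Set

noncomputable def EE (a : ℝ) : ℂ := Complex.exp (↑a * Complex.I)

lemma nlem (a : ℝ) : ‖EE a - 1‖ = 2 * |Real.sin (a/2)| := by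
  have : EE a - 1
      = Complex.ofReal (Real.cos a - 1) + Complex.ofReal (Real.sin a) * Complex.I := by
    rw [EE, Complex.exp_mul_I]; push_cast; ring
  rw [this, Complex.norm_def, Complex.normSq_add_mul_I]
  have h4 : |Real.sin (a/2)|^2 = (1 - Real.cos a)/2 := by
    rw [Real.abs_sin_half]
    exact Real.sq_sqrt (by nlinarith [Real.cos_le_one a])
  have h1 : (Real.cos a - 1)^2 + (Real.sin a)^2 = (2*|Real.sin (a/2)|)^2 := by
    nlinarith [Real.sin_sq_add_cos_sq a]
  rw [h1, Real.sqrt_sq (by positivity)]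

lemma Eadd (a b : ℝ) : EE (a + b) = EE a * EE b := by
  simp only [EE, ← Complex.exp_add]; push_cast; ring_nf

lemma Eabs (a : ℝ) : ‖EE a‖ = 1 := Complex.norm_exp_ofReal_mul_I a

lemma ndiff (a b : ℝ) : ‖EE a - EE b‖ = 2 * |Real.sin ((a-b)/2)| := by
  have h : EE a - EE b = EE b * (EE (a - b) - 1) := by
    rw [mul_sub, ← Eadd]; ring_nf
  rw [h, norm_mul, Eabs, one_mul, nlem]

lemma Esphere (a : ℝ) : EE a ∈ Metric.sphere (0:ℂ) 1 := by
  simp [EE, Complex.norm_exp_ofReal_mul_I]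

lemma Epow (a : ℝ) (m : ℕ) : (EE a) ^ m = EE (m * a) := by
  rw [EE, EE, ← Complex.exp_nat_mul]; push_cast; ring_nf

lemma sinlb {p a : ℝ} (hp0 : 0 < p) (hp : p ≤ π/2) (h1 : p ≤ a) (h2 : a ≤ π - p) :
    Real.sin p ≤ Real.sin a := by
  have hpi := Real.pi_pos
  have mono := Real.strictMonoOn_sin.monotoneOn
  rcases le_or_gt a (π/2) with h | h
  · exact mono (Set.mem_Icc.mpr ⟨by linarith, by linarith⟩)
      (Set.mem_Icc.mpr ⟨by linarith, by linarith⟩) h1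
  · rw [show Real.sin a = Real.sin (π - a) from (Real.sin_pi_sub a).symm]
    exact mono (Set.mem_Icc.mpr ⟨by linarith, by linarith⟩)
      (Set.mem_Icc.mpr ⟨by linarith, by linarith⟩) (by linarith)

lemma sinub {p x : ℝ} (hp0 : 0 < p) (hp : p ≤ π/2) (h : |x| ≤ p) :
    |Real.sin x| ≤ Real.sin p := by
  have hpi := Real.pi_pos
  have habs : 0 ≤ |x| := abs_nonneg x
  have h1 : |Real.sin x| = Real.sin |x| := by
    rcases abs_cases x with ⟨h2, h3⟩ | ⟨h2, h3⟩
    · rw [h2, _root_.abs_of_nonneg (Real.sin_nonneg_of_nonneg_of_le_pi h3 (by linarith))]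
    · rw [h2, Real.sin_neg, _root_.abs_of_nonpos
        (by simpa using Real.sin_nonneg_of_nonneg_of_le_pi (x := -x) (by linarith) (by linarith))]
  rw [h1]
  exact Real.strictMonoOn_sin.monotoneOn (Set.mem_Icc.mpr ⟨by linarith, by linarith⟩)
    (Set.mem_Icc.mpr ⟨by linarith, by linarith⟩) h

lemma sinabs {x : ℝ} (h0 : 0 ≤ x) (h1 : x ≤ π) : |Real.sin x| ≤ x := by
  rw [_root_.abs_of_nonneg (Real.sin_nonneg_of_nonneg_of_le_pi h0 h1)]
  exact Real.sin_le h0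

set_option maxHeartbeats 2000000 in
lemma key (n : ℕ) (hn : 3 ≤ n) (f : ℂ → ℂ)
    (hbij : Set.BijOn f (Metric.sphere (0 : ℂ) 1) (Metric.sphere (0 : ℂ) 1))
    (hcont : ContinuousOn f (Metric.sphere (0 : ℂ) 1))
    (hf1 : f 1 = 1)
    (heq : ∀ z ∈ Metric.sphere (0 : ℂ) 1,
      f (Complex.exp (2 * Real.pi * Complex.I / n) * z)
        = Complex.exp (2 * Real.pi * Complex.I / n) * f z) :
    ∀ z ∈ Metric.sphere (0 : ℂ) 1,
      ‖f z - z‖ ≤ ‖Complex.exp (2 * Real.pi * Complex.I / n) - 1‖ := by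
  have hpi := Real.pi_pos
  have hn0 : (0:ℝ) < n := by positivity
  set t : ℝ := 2 * π / n with ht
  clear_value t
  have ht0 : 0 < t := by rw [ht]; positivity
  have hn3 : (3:ℝ) ≤ n := by exact_mod_cast hn
  have ht3 : 3 * t ≤ 2 * π := by
    rw [ht, mul_div_assoc', div_le_iff₀ hn0]
    nlinarith
  have htpi : t ≤ 2 * π / 3 := by
    rw [ht, div_le_div_iff₀ hn0 (by norm_num)]
    nlinarith
  have hp2 : π / n = t / 2 := by rw [ht]; ring
  have hppos : 0 < t / 2 := by linarith
  have hphalf : t / 2 ≤ π / 2 := by nlinarith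
  set ω : ℂ := Complex.exp (2 * Real.pi * Complex.I / n) with hωdef
  have hω : ω = EE t := by
    rw [hωdef, EE, ht]
    congr 1
    push_cast
    ring
  have hωs : ω ∈ Metric.sphere (0:ℂ) 1 := hω ▸ Esphere t
  have hωabs : ‖ω‖ = 1 := by rw [hω]; exact Eabs t
  -- powers of ω on the sphere
  have hωpow : ∀ k : ℕ, ω ^ k = EE (k * t) := by
    intro k; rw [hω, Epow]
  have hωpows : ∀ k : ℕ, ω ^ k ∈ Metric.sphere (0:ℂ) 1 := by
    intro k; rw [hωpow]; exact Esphere _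
  -- iterated equivariance
  have hiter : ∀ k : ℕ, ∀ u ∈ Metric.sphere (0:ℂ) 1, f (ω ^ k * u) = ω ^ k * f u := by
    intro k
    induction k with
    | zero => intro u hu; simp
    | succ k ih =>
      intro u hu
      have hmem : ω ^ k * u ∈ Metric.sphere (0:ℂ) 1 := by
        simp only [mem_sphere_iff_norm, sub_zero] at hu ⊢
        rw [norm_mul, norm_pow, hωabs, one_pow, one_mul, hu]
      have : ω ^ (k+1) * u = ω * (ω ^ k * u) := by ring
      rw [this, heq _ hmem, ih u hu]
      ring
  -- fixed points
  have hfix : ∀ k : ℕ, f (ω ^ k) = ω ^ k := by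
    intro k
    have := hiter k 1 (by simp)
    simpa [hf1] using this
  have hinj := hbij.injOn
  -- the angle function
  set g : ℂ → ℝ := fun w => π + Complex.arg (-w) with hg
  clear_value g
  have hg1 : ∀ w ∈ Metric.sphere (0:ℂ) 1, w ≠ 1 → (g w ∈ Set.Ioo 0 (2*π) ∧ EE (g w) = w) := by
    intro w hws hw1
    have habs : ‖w‖ = 1 := by
      simpa using mem_sphere_zero_iff_norm.mp hws
    have harg := Complex.arg_mem_Ioc (-w)
    have hne : Complex.arg (-w) ≠ π := by
      intro hcon
      rw [Complex.arg_eq_pi_iff] at hcon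
      obtain ⟨hre, him⟩ := hcon
      simp only [Complex.neg_re, Complex.neg_im, neg_lt_zero, neg_eq_zero] at hre him
      apply hw1
      have : w = Complex.ofReal w.re := by
        apply Complex.ext <;> simp [him]
      rw [this] at habs ⊢
      rw [Complex.norm_real, Real.norm_eq_abs, _root_.abs_of_pos hre] at habs
      rw [habs]; norm_num
    constructor
    · refine Set.mem_Ioo.mpr ⟨?_, ?_⟩
      · have := harg.1; simp only [hg]; linarith
      · have := lt_of_le_of_ne harg.2 hne; simp only [hg]; linarith
    · have hwabs : ‖-w‖ = 1 := by rw [norm_neg, habs]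
      have := Complex.norm_mul_exp_arg_mul_I (-w)
      rw [hwabs] at this
      simp only [Complex.ofReal_one, one_mul] at this
      simp only [hg, EE]
      push_cast
      rw [add_mul, Complex.exp_add, this, Complex.exp_pi_mul_I]
      ring
  -- the sets
  set A : Set ℂ := (fun a => EE a) '' Set.Ioo 0 t with hA
  have hAs : A ⊆ Metric.sphere (0:ℂ) 1 := by
    rintro _ ⟨a, _, rfl⟩; exact Esphere a
  set B : Set ℂ := f '' A with hB
  have hBs : B ⊆ Metric.sphere (0:ℂ) 1 := by
    rintro _ ⟨z, hz, rfl⟩; exact hbij.mapsTo (hAs hz)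
  -- elements of A are distinct from the root-of-unity points in [0, 2π)
  have hAne : ∀ a ∈ Set.Ioo 0 t, ∀ b ∈ Set.Ico 0 (2*π), a ≠ b → EE a ≠ EE b := by
    intro a ha b hb hab hcon
    have : ‖EE a - EE b‖ = 0 := by rw [hcon]; simp
    rw [ndiff] at this
    have hs : Real.sin ((a-b)/2) = 0 := by
      have := abs_eq_zero.mp (by linarith [abs_nonneg (Real.sin ((a-b)/2))] : |Real.sin ((a-b)/2)| = 0)
      exact this
    have h1 : |(a - b)/2| < π := by
      simp only [Set.mem_Ioo, Set.mem_Ico] at ha hb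
      rw [abs_lt]; constructor <;> nlinarith
    obtain ⟨k, hk⟩ := Real.sin_eq_zero_iff.mp hs
    have hk0 : k = 0 := by
      by_contra h0
      have h2 : (1:ℝ) ≤ |(k:ℝ)| := by exact_mod_cast Int.one_le_abs h0
      have h3 : |(k:ℝ) * π| = |(k:ℝ)| * π := by
        rw [abs_mul, _root_.abs_of_pos hpi]
      rw [hk] at h3
      nlinarith [abs_nonneg ((a-b)/2)]
    rw [hk0] at hk
    simp at hk
    exact hab (by linarith)
  have hBne1 : ∀ w ∈ B, w ≠ 1 := by
    rintro _ ⟨_, ⟨a, ha, rfl⟩, rfl⟩ hcon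
    have h1s : (1:ℂ) ∈ Metric.sphere (0:ℂ) 1 := by simp
    have hEa : EE a = 1 := hinj (hAs ⟨a, ha, rfl⟩) h1s (by rw [hcon, hf1])
    have hE0 : EE 0 = 1 := by simp [EE]
    exact hAne a ha 0 ⟨le_refl 0, by linarith⟩ (ne_of_gt ha.1) (by rw [hEa, hE0])
  have hgB : ∀ w ∈ B, g w ∈ Set.Ioo 0 (2*π) ∧ EE (g w) = w :=
    fun w hw => hg1 w (hBs hw) (hBne1 w hw)
  have hfω : f ω = ω := by simpa using hfix 1
  have havoid : ∀ w ∈ B, g w ≠ t ∧ g w ≠ 2*π - t := by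
    rintro _ ⟨_, ⟨a, ha, rfl⟩, rfl⟩
    have hmemB : f (EE a) ∈ B := ⟨EE a, ⟨a, ha, rfl⟩, rfl⟩
    have hgw := hgB _ hmemB
    constructor
    · intro hcon
      have hweq : f (EE a) = EE t := by rw [← hgw.2, hcon]
      have h1 : f (EE a) = f ω := by rw [hweq, hω, ← hω, hfω]
      have h2 : EE a = EE t := by rw [← hω]; exact hinj (hAs ⟨a, ha, rfl⟩) hωs h1
      exact hAne a ha t ⟨le_of_lt ht0, by linarith⟩ (ne_of_lt ha.2) h2
    · intro hcon
      have hpow : (ω:ℂ)^(n-1) = EE (2*π - t) := by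
        rw [hωpow]
        congr 1
        have hcast : ((n-1:ℕ):ℝ) = (n:ℝ) - 1 := by
          rw [Nat.cast_sub (by omega)]; norm_num
        rw [hcast, ht]; field_simp
      have hweq : f (EE a) = f (ω^(n-1)) := by rw [← hgw.2, hcon, hfix, hpow]
      have h2 : EE a = EE (2*π - t) := by
        rw [← hpow]; exact hinj (hAs ⟨a, ha, rfl⟩) (hωpows (n-1)) hweq
      exact hAne a ha (2*π - t) ⟨by linarith, by linarith⟩ (by
        have : a < t := ha.2
        intro hcon2; rw [hcon2] at this; linarith) h2
  -- connectedness of the image of angles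
  have hEcont : Continuous (fun a : ℝ => EE a) := by
    unfold EE
    exact Complex.continuous_exp.comp ((Complex.continuous_ofReal).mul continuous_const)
  have hgcont : ContinuousOn g B := by
    intro w hw
    have habs : ‖w‖ = 1 := by
      simpa using mem_sphere_zero_iff_norm.mp (hBs hw)
    have hslit : -w ∈ Complex.slitPlane := by
      rw [Complex.mem_slitPlane_iff]
      simp only [Complex.neg_re, Complex.neg_im, ne_eq, neg_eq_zero]
      by_contra hcon
      push_neg at hcon
      obtain ⟨h1, h2⟩ := hcon
      apply hBne1 w hw
      have h3 : 0 ≤ w.re := by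
        have := h1
        linarith
      have hw_eq : w = Complex.ofReal w.re := Complex.ext rfl (by simp [h2])
      have h4 : |w.re| = 1 := by rw [hw_eq, Complex.norm_real, Real.norm_eq_abs] at habs; exact habs
      rw [_root_.abs_of_nonneg h3] at h4
      rw [hw_eq, h4]
      norm_num
    rw [hg]
    exact ContinuousAt.continuousWithinAt
      (continuousAt_const.add ((Complex.continuousAt_arg hslit).comp continuous_neg.continuousAt))
  have hC : IsPreconnected (g '' B) := by
    have hA' : IsPreconnected A := isPreconnected_Ioo.image _ hEcont.continuousOn
    have hB' : IsPreconnected B := hA'.image _ (hcont.mono hAs)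
    exact hB'.image _ hgcont
  -- epsilon
  set ε : ℝ := 2 * Real.sin (t/2) with hεdef
  clear_value ε
  have hε : 0 < ε := by
    have := Real.sin_pos_of_pos_of_lt_pi hppos (by linarith : t/2 < π)
    linarith
  -- a point of B close to 1
  have h1s : (1:ℂ) ∈ Metric.sphere (0:ℂ) 1 := by simp
  obtain ⟨δ, hδ0, hδ⟩ := Metric.continuousWithinAt_iff.mp (hcont 1 h1s) ε hε
  set θ₁ : ℝ := min (δ/2) (t/2) with hθ₁def
  clear_value θ₁
  have hθ₁m : θ₁ ∈ Set.Ioo 0 t := by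
    rw [hθ₁def]
    exact ⟨lt_min (by linarith) hppos, lt_of_le_of_lt (min_le_right _ _) (by linarith)⟩
  have hθ₁δ : θ₁ ≤ δ/2 := by rw [hθ₁def]; exact min_le_left _ _
  have hd1 : dist (EE θ₁) 1 < δ := by
    rw [dist_eq_norm, nlem]
    have hs : |Real.sin (θ₁/2)| ≤ θ₁/2 := sinabs (by linarith [hθ₁m.1]) (by nlinarith [hθ₁m.2])
    linarith
  have hw₁ := hδ (Esphere θ₁) hd1
  rw [hf1, dist_eq_norm] at hw₁
  have hw₁B : f (EE θ₁) ∈ B := ⟨EE θ₁, ⟨θ₁, hθ₁m, rfl⟩, rfl⟩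
  have hgw₁ := hgB _ hw₁B
  have hc₁ : g (f (EE θ₁)) < t ∨ 2*π - t < g (f (EE θ₁)) := by
    by_contra hcon
    push_neg at hcon
    obtain ⟨h1, h2⟩ := hcon
    have htest : t/2 ≤ g (f (EE θ₁)) / 2 := by gcongr <;> norm_num
    have hlow : Real.sin (t/2) ≤ Real.sin (g (f (EE θ₁)) / 2) :=
      sinlb hppos hphalf htest (by linarith only [h2])
    have : ε ≤ ‖f (EE θ₁) - 1‖ := by
      rw [← hgw₁.2, nlem]
      have := le_abs_self (Real.sin (g (f (EE θ₁)) / 2))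
      rw [hεdef]
      linarith
    linarith
  -- a point of B close to ω
  obtain ⟨δ₂, hδ₂0, hδ₂⟩ := Metric.continuousWithinAt_iff.mp (hcont ω hωs) ε hε
  set m : ℝ := min (δ₂/2) (t/2) with hmdef
  clear_value m
  have hm0 : 0 < m := by rw [hmdef]; exact lt_min (by linarith) hppos
  have hmt : m ≤ t/2 := by rw [hmdef]; exact min_le_right _ _
  have hmδ : m ≤ δ₂/2 := by rw [hmdef]; exact min_le_left _ _
  set θ₂ : ℝ := t - m with hθ₂def
  clear_value θ₂
  have hθ₂m : θ₂ ∈ Set.Ioo 0 t := ⟨by rw [hθ₂def]; linarith, by rw [hθ₂def]; linarith⟩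
  have hd2 : dist (EE θ₂) ω < δ₂ := by
    rw [dist_eq_norm, hω, ndiff]
    have h5 : |Real.sin ((θ₂ - t)/2)| = |Real.sin (m/2)| := by
      rw [show (θ₂ - t)/2 = -(m/2) by rw [hθ₂def]; ring, Real.sin_neg, abs_neg]
    rw [h5]
    have hs : |Real.sin (m/2)| ≤ m/2 := sinabs (by linarith) (by nlinarith)
    linarith [hmδ]
  have hw₂ := hδ₂ (Esphere θ₂) hd2
  rw [hfω, dist_eq_norm] at hw₂
  have hw₂B : f (EE θ₂) ∈ B := ⟨EE θ₂, ⟨θ₂, hθ₂m, rfl⟩, rfl⟩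
  have hgw₂ := hgB _ hw₂B
  have hc₂ : g (f (EE θ₂)) < 2*t := by
    by_contra hcon
    push_neg at hcon
    have hx1 : t/2 ≤ (g (f (EE θ₂)) - t)/2 := by linarith only [hcon]
    have hx2 : (g (f (EE θ₂)) - t)/2 ≤ π - t/2 := by linarith only [hgw₂.1.2]
    have hlow : Real.sin (t/2) ≤ Real.sin ((g (f (EE θ₂)) - t)/2) := sinlb hppos hphalf hx1 hx2
    have : ε ≤ ‖f (EE θ₂) - ω‖ := by
      rw [← hgw₂.2, hω, ndiff]
      have := le_abs_self (Real.sin ((g (f (EE θ₂)) - t)/2))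
      rw [hεdef]
      linarith
    linarith
  -- hence g w₁ < t
  have hgw₁t : g (f (EE θ₁)) < t := by
    rcases hc₁ with h | h
    · exact h
    · exfalso
      have hmem1 : g (f (EE θ₂)) ∈ g '' B := ⟨_, hw₂B, rfl⟩
      have hmem2 : g (f (EE θ₁)) ∈ g '' B := ⟨_, hw₁B, rfl⟩
      have hsub := hC.Icc_subset hmem1 hmem2
      have : (2*π - t) ∈ g '' B := hsub ⟨by linarith, by linarith⟩
      obtain ⟨w, hwB, hweq⟩ := this
      exact (havoid w hwB).2 hweq
  -- the main arc claim
  have hBarc : ∀ w ∈ B, g w ∈ Set.Ioo 0 t := by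
    intro w hwB
    refine ⟨(hgB w hwB).1.1, ?_⟩
    by_contra hcon
    push_neg at hcon
    have hne := (havoid w hwB).1
    have hgt : t < g w := lt_of_le_of_ne hcon (Ne.symm hne)
    have hmem1 : g (f (EE θ₁)) ∈ g '' B := ⟨_, hw₁B, rfl⟩
    have hmem2 : g w ∈ g '' B := ⟨_, hwB, rfl⟩
    have hsub := hC.Icc_subset hmem1 hmem2
    have : t ∈ g '' B := hsub ⟨by linarith, by linarith⟩
    obtain ⟨w', hw'B, hw'eq⟩ := this
    exact (havoid w' hw'B).1 hw'eq
  -- final computation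
  intro z hz
  have habsz : ‖z‖ = 1 := by
    simpa using mem_sphere_zero_iff_norm.mp hz
  obtain ⟨θ, hθmem, hθz⟩ : ∃ θ : ℝ, θ ∈ Set.Ico 0 (2*π) ∧ EE θ = z := by
    have h := Complex.norm_mul_exp_arg_mul_I z
    rw [habsz] at h
    simp only [Complex.ofReal_one, one_mul] at h
    have harg := Complex.arg_mem_Ioc z
    rcases lt_or_ge (Complex.arg z) 0 with hneg | hpos
    · refine ⟨Complex.arg z + 2*π, ⟨by linarith [harg.1], by linarith⟩, ?_⟩
      have h2π : EE (2*π) = 1 := by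
        rw [EE]
        push_cast
        exact Complex.exp_two_pi_mul_I
      rw [Eadd, h2π, mul_one]
      exact h
    · exact ⟨Complex.arg z, ⟨hpos, by linarith [harg.2]⟩, h⟩
  set k : ℕ := ⌊θ / t⌋₊ with hkdef
  have hk1 : (k:ℝ) ≤ θ/t := Nat.floor_le (div_nonneg hθmem.1 (le_of_lt ht0))
  have hk2 : θ/t < k + 1 := Nat.lt_floor_add_one _
  set r : ℝ := θ - k * t with hrdef
  clear_value r
  have hr0 : 0 ≤ r := by
    have h7 : (k:ℝ) * t ≤ θ := by
      rw [← le_div_iff₀ ht0]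
      exact hk1
    rw [hrdef]
    linarith
  have hr1 : r < t := by
    have h8 : θ < ((k:ℝ) + 1) * t := by
      rw [← div_lt_iff₀ ht0]
      exact hk2
    rw [hrdef]
    nlinarith
  have hzdec : z = ω^k * EE r := by
    rw [hωpow, ← Eadd, show (k:ℝ)*t + r = θ by rw [hrdef]; ring]
    exact hθz.symm
  have hωk1 : ‖ω^k‖ = 1 := by rw [norm_pow, hωabs, one_pow]
  have hnorm : ‖ω - 1‖ = ε := by
    rw [hω, nlem, hεdef, _root_.abs_of_nonneg (Real.sin_nonneg_of_nonneg_of_le_pi (by linarith) (by linarith))]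
  rcases eq_or_lt_of_le hr0 with hr | hr
  · have hEr : EE r = 1 := by rw [← hr]; simp [EE]
    have hzk : z = ω^k := by rw [hzdec, hEr, mul_one]
    rw [hzk, hfix k, sub_self, norm_zero]
    exact norm_nonneg _
  · have hrm : r ∈ Set.Ioo 0 t := ⟨hr, hr1⟩
    have hwB : f (EE r) ∈ B := ⟨EE r, ⟨r, hrm, rfl⟩, rfl⟩
    have hs := hBarc _ hwB
    have hEs : EE (g (f (EE r))) = f (EE r) := (hgB _ hwB).2
    have hfz : f z = ω^k * f (EE r) := by rw [hzdec]; exact hiter k (EE r) (Esphere r)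
    have hcalc : ‖f z - z‖ = ‖f (EE r) - EE r‖ := by
      rw [hfz, hzdec, show ω^k * f (EE r) - ω^k * EE r = ω^k * (f (EE r) - EE r) by ring,
        norm_mul, hωk1, one_mul]
    rw [hcalc, ← hEs, ndiff, hnorm, hεdef]
    have habs : |(g (f (EE r)) - r)/2| ≤ t/2 := by
      have h6 : |g (f (EE r)) - r| ≤ t := by
        rw [abs_le]
        exact ⟨by linarith [hs.1, hrm.2], by linarith [hs.2, hrm.1]⟩
      rw [abs_div, _root_.abs_of_pos (by norm_num : (0:ℝ) < 2)]
      linarith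
    have := sinub hppos hphalf habs
    linarith



lemma omega_norm (n : ℕ) (hn : 1 ≤ n) :
    ‖Complex.exp (2 * Real.pi * Complex.I / n) - 1‖ = 2 * |Real.sin (π/n)| := by
  have h : Complex.exp (2 * Real.pi * Complex.I / n) = EE (2*π/n) := by
    rw [EE]; congr 1; push_cast; ring
  rw [h, nlem, show (2*π/(n:ℝ))/2 = π/n by ring]


/-- if n ≥ 3, ω = exp(2πi/n), and f is a homeomorphism of the unit circle
S¹ ⊂ ℂ (i.e. a continuous bijection of the compact set S¹ onto itself) with f(1) = 1 and
f(ωz) = ω f(z) for all z ∈ S¹, then |f(z) − z| ≤ |ω − 1| on S¹. In particular, a sequence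
fₙ of such homeomorphisms (fixing 1, commuting with the rotation by exp(2πi/n)) converges
uniformly on S¹ to the identity as n → ∞. -/
theorem stmt13 :
    (∀ n : ℕ, 3 ≤ n → ∀ f : ℂ → ℂ,
      Set.BijOn f (Metric.sphere (0 : ℂ) 1) (Metric.sphere (0 : ℂ) 1) →
      ContinuousOn f (Metric.sphere (0 : ℂ) 1) →
      f 1 = 1 →
      (∀ z ∈ Metric.sphere (0 : ℂ) 1,
        f (Complex.exp (2 * Real.pi * Complex.I / n) * z)
          = Complex.exp (2 * Real.pi * Complex.I / n) * f z) →
      ∀ z ∈ Metric.sphere (0 : ℂ) 1,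
        ‖f z - z‖ ≤ ‖Complex.exp (2 * Real.pi * Complex.I / n) - 1‖) ∧
    (∀ F : ℕ → ℂ → ℂ,
      (∀ n : ℕ, 3 ≤ n →
        Set.BijOn (F n) (Metric.sphere (0 : ℂ) 1) (Metric.sphere (0 : ℂ) 1) ∧
        ContinuousOn (F n) (Metric.sphere (0 : ℂ) 1) ∧
        F n 1 = 1 ∧
        (∀ z ∈ Metric.sphere (0 : ℂ) 1,
          F n (Complex.exp (2 * Real.pi * Complex.I / n) * z)
            = Complex.exp (2 * Real.pi * Complex.I / n) * F n z)) →
      TendstoUniformlyOn (fun n => F n) id Filter.atTop (Metric.sphere (0 : ℂ) 1)) := by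
  have hpi := Real.pi_pos
  constructor
  · exact key
  · intro F hF
    rw [Metric.tendstoUniformlyOn_iff]
    intro ε hε
    rw [Filter.eventually_atTop]
    refine ⟨max 3 (⌈4*π/ε⌉₊ + 1), fun n hn => ?_⟩
    have hn3 : 3 ≤ n := le_trans (le_max_left _ _) hn
    have hnb : ⌈4*π/ε⌉₊ + 1 ≤ n := le_trans (le_max_right _ _) hn
    have hn0 : (0:ℝ) < n := by
      have : (3:ℝ) ≤ n := by exact_mod_cast hn3
      linarith
    obtain ⟨hbij, hcont, hf1, heq⟩ := hF n hn3
    intro z hz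
    have hkey := key n hn3 (F n) hbij hcont hf1 heq z hz
    rw [dist_eq_norm, id_eq, norm_sub_rev]
    have hub : 2 * |Real.sin (π/n)| ≤ 2 * (π/n) := by
      have := sinabs (x := π/n) (by positivity) (by
        rw [div_le_iff₀ hn0]
        nlinarith [show (3:ℝ) ≤ n from by exact_mod_cast hn3, hpi])
      linarith
    have hlarge : 4*π/ε < n := by
      have h1 : 4*π/ε ≤ (⌈4*π/ε⌉₊ : ℝ) := Nat.le_ceil _
      have h2 : ((⌈4*π/ε⌉₊ + 1 : ℕ) : ℝ) ≤ n := by exact_mod_cast hnb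
      push_cast at h2
      linarith
    have hsmall : 2 * (π/n) < ε := by
      rw [mul_div_assoc', div_lt_iff₀ hn0]
      have h3 : 4*π < ε * n := by
        have := (div_lt_iff₀ hε).mp hlarge
        linarith
      linarith
    calc ‖F n z - z‖ ≤ ‖Complex.exp (2 * Real.pi * Complex.I / n) - 1‖ := hkey
      _ = 2 * |Real.sin (π/n)| := omega_norm n (by omega)
      _ ≤ 2 * (π/n) := hub
      _ < ε := hsmall
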